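/- Let R be a noetherian local domain with maximal ideal m_R and m_R-adic completion R̂, and let ν be a valuation of the quotient field of R whose valuation ring V dominates R. Then the prime ideal of infinite value Q(R̂) = {f ∈ R̂ : f satisfies (*)} is a prime ideal of R̂ (in particular it is a proper ideal closed under addition and under multiplication by elements of R̂, and f·g ∈ Q(R̂) implies f ∈ Q(R̂) or g ∈ Q(R̂)). -/

import Mathlib

/-!
STATEMENT 6: The set `Q(R̂)` of elements of the `m_R`-adic completion `R̂` of a
noetherian local domain `R` (dominated by the valuation ring of `ν`) satisfying
condition (*) is a prime ideal of `R̂`.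

`R` is realized as a subring of a field `K` which is its quotient field and the
valuation is multiplicative: the additive condition `ν(f_n) ≥ l·ν(m_R)` reads
`ν(f_n) ≤ c ^ l`, `c` being the maximal multiplicative value of `ν` on `m_R`.
For a local ring the maximal ideal is `(⊥ : Ideal R).jacobson`.
-/

noncomputable section

variable {K : Type*} [Field K]

/-- `K` is the quotient field of the subring `R`. -/
def Subring.IsFractionFieldOf (R : Subring K) : Prop :=
  ∀ x : K, ∃ a b : R, (b : K) ≠ 0 ∧ x * (b : K) = (a : K)

/-- The local subring `V` dominates the local subring `R`: `R ⊆ V` and `m_V ∩ R = m_R`. -/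
def Subring.Dominates (V R : Subring K) : Prop :=
  IsLocalRing V ∧ IsLocalRing R ∧
    ∃ h : R ≤ V, ∀ r : R,
      (Subring.inclusion h r ∈ (⊥ : Ideal V).jacobson ↔ r ∈ (⊥ : Ideal R).jacobson)

/-- Convergence of a sequence of elements of `A` to an element of the `I`-adic completion. -/
def TendstoAdic {A : Type*} [CommRing A] (I : Ideal A) (fn : ℕ → A)
    (F : AdicCompletion I A) : Prop :=
  ∀ n : ℕ, ∃ N : ℕ, ∀ m ≥ N,
    AdicCompletion.eval I A n (AdicCompletion.of I A (fn m)) = AdicCompletion.eval I A n F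

variable {Γ : Type*} [LinearOrderedCommGroupWithZero Γ]

/-- `c = ν(m_R)`: the maximal multiplicative value of `ν` on `m_R` (minimal additive value). -/
def IsMaxIdealValue (R : Subring K) (ν : Valuation K Γ) (c : Γ) : Prop :=
  (∃ a : R, a ∈ (⊥ : Ideal R).jacobson ∧ ν (a : K) = c) ∧
    ∀ b : R, b ∈ (⊥ : Ideal R).jacobson → ν (b : K) ≤ c

/-- Condition (*): some Cauchy sequence in `R` converging to `F` has values eventually
`≥ l·ν(m_R)` (multiplicatively `≤ c ^ l`) for every `l`. -/
def SatisfiesStar (R : Subring K) (ν : Valuation K Γ) (c : Γ)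
    (F : AdicCompletion ((⊥ : Ideal R).jacobson) R) : Prop :=
  ∃ fn : ℕ → R, TendstoAdic _ fn F ∧
    ∀ l : ℕ, ∃ N : ℕ, ∀ n ≥ N, ν ((fn n : R) : K) ≤ c ^ l

/-- Any element of the adic completion is the limit of a sequence from the base ring. -/
theorem exists_tendstoAdic {A : Type*} [CommRing A] (I : Ideal A)
    (F : AdicCompletion I A) : ∃ fn : ℕ → A, TendstoAdic I fn F := by
  choose fn hfn using fun n =>
    Submodule.Quotient.mk_surjective (I ^ n • ⊤ : Submodule A A) (F.val n)
  refine ⟨fn, fun n => ⟨n, fun k hk => ?_⟩⟩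
  rw [AdicCompletion.eval_of, AdicCompletion.eval_apply, Submodule.mkQ_apply,
    ← (show AdicCompletion.transitionMap I A hk (Submodule.Quotient.mk (fn k)) =
      Submodule.Quotient.mk (fn k) from AdicCompletion.transitionMap_ideal_mk I hk (fn k)), hfn k, F.property hk]

/-- If two elements of the base ring have the same image at level `n`, their
difference lies in `I ^ n`. -/
theorem sub_mem_pow_of_eval_eq {A : Type*} [CommRing A] (I : Ideal A) (n : ℕ) (a b : A)
    (h : AdicCompletion.eval I A n (AdicCompletion.of I A a)
      = AdicCompletion.eval I A n (AdicCompletion.of I A b)) : a - b ∈ I ^ n := by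
  rw [AdicCompletion.eval_of, AdicCompletion.eval_of, Submodule.mkQ_apply,
    Submodule.mkQ_apply] at h
  have := (Submodule.Quotient.eq _).mp h
  simpa [Ideal.smul_eq_mul, Ideal.mul_top] using this

/-- Sums of convergent sequences converge to the sum. -/
theorem tendstoAdic_add {A : Type*} [CommRing A] (I : Ideal A) (F G : AdicCompletion I A)
    (fn gn : ℕ → A) (hF : TendstoAdic I fn F) (hG : TendstoAdic I gn G) :
    TendstoAdic I (fun k => fn k + gn k) (F + G) := by
  intro n
  obtain ⟨N1, h1⟩ := hF n
  obtain ⟨N2, h2⟩ := hG n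
  refine ⟨max N1 N2, fun k hk => ?_⟩
  rw [map_add, map_add, map_add, h1 k (le_trans (le_max_left _ _) hk),
    h2 k (le_trans (le_max_right _ _) hk)]

/-- Products of convergent sequences converge to the product. -/
theorem tendstoAdic_mul {A : Type*} [CommRing A] (I : Ideal A) (F G : AdicCompletion I A)
    (fn gn : ℕ → A) (hF : TendstoAdic I fn F) (hG : TendstoAdic I gn G) :
    TendstoAdic I (fun k => fn k * gn k) (F * G) := by
  intro n
  obtain ⟨N1, h1⟩ := hF n
  obtain ⟨N2, h2⟩ := hG n
  refine ⟨max N1 N2, fun k hk => ?_⟩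
  have e1 := h1 k (le_trans (le_max_left _ _) hk)
  have e2 := h2 k (le_trans (le_max_right _ _) hk)
  have hof : AdicCompletion.of I A (fn k * gn k)
      = AdicCompletion.of I A (fn k) * AdicCompletion.of I A (gn k) := rfl
  rw [hof]
  rw [AdicCompletion.eval_apply, AdicCompletion.eval_apply] at e1 e2 ⊢
  rw [AdicCompletion.val_mul, AdicCompletion.val_mul, e1, e2]

/-- Elements of `m_R ^ n` have value at most `c ^ n`. -/
theorem val_le_pow_of_mem_pow (R : Subring K) (ν : Valuation K Γ) (c : Γ)
    (hR1 : ∀ r : R, ν (r : K) ≤ 1)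
    (hc2 : ∀ b : R, b ∈ (⊥ : Ideal R).jacobson → ν (b : K) ≤ c) :
    ∀ (n : ℕ) (x : R), x ∈ (⊥ : Ideal R).jacobson ^ n → ν (x : K) ≤ c ^ n := by
  intro n
  induction n with
  | zero => intro x _; simpa using hR1 x
  | succ k ih =>
    intro x hx
    rw [pow_succ] at hx
    refine Submodule.mul_induction_on hx ?_ ?_
    · intro a ha b hb
      have h1 : ((a * b : R) : K) = (a : K) * (b : K) := by push_cast; ring
      rw [h1, map_mul, pow_succ]
      exact mul_le_mul' (ih a ha) (hc2 b hb)
    · intro x y hx' hy'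
      have h1 : ((x + y : R) : K) = (x : K) + (y : K) := by push_cast; ring
      rw [h1]
      exact ν.map_add_le hx' hy'

/-- A convergent sequence failing condition (*) has eventually constant value,
larger than some `c ^ l`. -/
theorem eventually_const_of_not_star (R : Subring K) (ν : Valuation K Γ) (c : Γ)
    (hR1 : ∀ r : R, ν (r : K) ≤ 1)
    (hc2 : ∀ b : R, b ∈ (⊥ : Ideal R).jacobson → ν (b : K) ≤ c)
    (F : AdicCompletion ((⊥ : Ideal R).jacobson) R) (fn : ℕ → R)
    (htd : TendstoAdic _ fn F)
    (hfail : ¬ (∀ l : ℕ, ∃ N, ∀ n ≥ N, ν ((fn n : R) : K) ≤ c ^ l)) :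
    ∃ (l N : ℕ) (u : Γ), c ^ l < u ∧ ∀ k ≥ N, ν ((fn k : R) : K) = u := by
  push_neg at hfail
  obtain ⟨l, hl⟩ := hfail
  obtain ⟨N, hN⟩ := htd l
  obtain ⟨n0, hn0N, hn0⟩ := hl N
  refine ⟨l, N, ν ((fn n0 : R) : K), hn0, fun k hk => ?_⟩
  have hdk : fn k - fn n0 ∈ (⊥ : Ideal R).jacobson ^ l :=
    sub_mem_pow_of_eval_eq _ l _ _ (by rw [hN k hk, hN n0 hn0N])
  have hle : ν ((fn k - fn n0 : R) : K) ≤ c ^ l :=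
    val_le_pow_of_mem_pow R ν c hR1 hc2 l _ hdk
  have h1 : ((fn k : R) : K) = ((fn n0 : R) : K) + ((fn k - fn n0 : R) : K) := by
    push_cast; ring
  rw [h1, Valuation.map_add_eq_of_lt_left _ (lt_of_le_of_lt hle hn0)]

/-- The set of elements of the completion satisfying condition (*), as an ideal. -/
def starIdeal (R : Subring K) (ν : Valuation K Γ) (c : Γ)
    (hR1 : ∀ r : R, ν (r : K) ≤ 1) :
    Ideal (AdicCompletion ((⊥ : Ideal R).jacobson) R) where
  carrier := {F | SatisfiesStar R ν c F}
  add_mem' := by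
    intro F G hFm hGm
    obtain ⟨fn, hfn, hfv⟩ := hFm
    obtain ⟨gn, hgn, hgv⟩ := hGm
    refine ⟨fun k => fn k + gn k, tendstoAdic_add _ F G fn gn hfn hgn, fun l => ?_⟩
    obtain ⟨N1, h1⟩ := hfv l
    obtain ⟨N2, h2⟩ := hgv l
    refine ⟨max N1 N2, fun k hk => ?_⟩
    have he : ((fn k + gn k : R) : K) = ((fn k : R) : K) + ((gn k : R) : K) := by
      push_cast; ring
    rw [he]
    exact ν.map_add_le (h1 k (le_trans (le_max_left _ _) hk))
      (h2 k (le_trans (le_max_right _ _) hk))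
  zero_mem' := by
    refine ⟨fun _ => 0,
      fun n => ⟨0, fun k _ => by
        rw [(AdicCompletion.of ((⊥ : Ideal R).jacobson) R).map_zero]⟩,
      fun l => ⟨0, fun k _ => ?_⟩⟩
    rw [ZeroMemClass.coe_zero, map_zero]
    exact zero_le'
  smul_mem' := by
    intro A F hFmem
    obtain ⟨fn, hfn, hfv⟩ := hFmem
    obtain ⟨an, han⟩ := exists_tendstoAdic _ A
    rw [smul_eq_mul]
    refine ⟨fun k => an k * fn k, tendstoAdic_mul _ A F an fn han hfn, fun l => ?_⟩
    obtain ⟨N, hN⟩ := hfv l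
    refine ⟨N, fun k hk => ?_⟩
    have he : ((an k * fn k : R) : K) = ((an k : R) : K) * ((fn k : R) : K) := by
      push_cast; ring
    rw [he, map_mul]
    calc ν ((an k : R) : K) * ν ((fn k : R) : K) ≤ 1 * c ^ l :=
          mul_le_mul' (hR1 _) (hN k hk)
      _ = c ^ l := one_mul _

theorem mem_starIdeal (R : Subring K) (ν : Valuation K Γ) (c : Γ)
    (hR1 : ∀ r : R, ν (r : K) ≤ 1) (F : AdicCompletion ((⊥ : Ideal R).jacobson) R) :
    F ∈ starIdeal R ν c hR1 ↔ SatisfiesStar R ν c F := Iff.rfl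

/-- `1` does not satisfy condition (*) when `c < 1`. -/
theorem not_star_one (R : Subring K) (ν : Valuation K Γ) (c : Γ)
    (hR1 : ∀ r : R, ν (r : K) ≤ 1)
    (hc2 : ∀ b : R, b ∈ (⊥ : Ideal R).jacobson → ν (b : K) ≤ c) (hc1 : c < 1) :
    ¬ SatisfiesStar R ν c 1 := by
  rintro ⟨hn, htd, hval⟩
  obtain ⟨N1, hN1⟩ := htd 1
  obtain ⟨N2, hN2⟩ := hval 1
  set k := max N1 N2 with hkdef
  have hd : hn k - 1 ∈ (⊥ : Ideal R).jacobson ^ 1 := by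
    refine sub_mem_pow_of_eval_eq _ 1 _ _ ?_
    have h1 : AdicCompletion.of ((⊥ : Ideal R).jacobson) R (1 : R) = 1 := rfl
    rw [h1]
    exact hN1 k (le_max_left _ _)
  rw [pow_one] at hd
  have hlt : ν ((hn k - 1 : R) : K) < 1 := lt_of_le_of_lt (hc2 _ hd) hc1
  have he : ((hn k : R) : K) = 1 + ((hn k - 1 : R) : K) := by push_cast; ring
  have hone : ν ((hn k : R) : K) = 1 := by rw [he, ν.map_one_add_of_lt hlt]
  have := hN2 k (le_max_right _ _)
  rw [hone, pow_one] at this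
  exact absurd (lt_of_le_of_lt this hc1) (lt_irrefl 1)

/-- Condition (*) is prime: if a product satisfies it, one of the factors does. -/
theorem star_mul (R : Subring K) (ν : Valuation K Γ) (c : Γ)
    (hR1 : ∀ r : R, ν (r : K) ≤ 1)
    (hc2 : ∀ b : R, b ∈ (⊥ : Ideal R).jacobson → ν (b : K) ≤ c)
    (F G : AdicCompletion ((⊥ : Ideal R).jacobson) R)
    (hFG : SatisfiesStar R ν c (F * G)) :
    SatisfiesStar R ν c F ∨ SatisfiesStar R ν c G := by
  by_contra hcon
  push_neg at hcon
  obtain ⟨hF, hG⟩ := hcon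
  obtain ⟨fn, hfn⟩ := exists_tendstoAdic _ F
  obtain ⟨gn, hgn⟩ := exists_tendstoAdic _ G
  have hFfail : ¬ (∀ l : ℕ, ∃ N, ∀ n ≥ N, ν ((fn n : R) : K) ≤ c ^ l) :=
    fun h => hF ⟨fn, hfn, h⟩
  have hGfail : ¬ (∀ l : ℕ, ∃ N, ∀ n ≥ N, ν ((gn n : R) : K) ≤ c ^ l) :=
    fun h => hG ⟨gn, hgn, h⟩
  obtain ⟨lf, Nf, u, hu, hfu⟩ := eventually_const_of_not_star R ν c hR1 hc2 F fn hfn hFfail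
  obtain ⟨lg, Ng, w, hw, hgw⟩ := eventually_const_of_not_star R ν c hR1 hc2 G gn hgn hGfail
  have hluw : c ^ (lf + lg) < u * w := by
    rw [pow_add]; exact mul_lt_mul'' hu hw zero_le' zero_le'
  set l := lf + lg with hldef
  obtain ⟨hn, htd, hval⟩ := hFG
  have hprod := tendstoAdic_mul _ F G fn gn hfn hgn
  obtain ⟨N1, hN1⟩ := htd l
  obtain ⟨N2, hN2⟩ := hprod l
  obtain ⟨N3, hN3⟩ := hval l
  set k := max (max N1 N2) (max N3 (max Nf Ng)) with hkdef
  have hk1 : N1 ≤ k := le_trans (le_max_left _ _) (le_max_left _ _)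
  have hk2 : N2 ≤ k := le_trans (le_max_right _ _) (le_max_left _ _)
  have hk3 : N3 ≤ k := le_trans (le_max_left _ _) (le_max_right _ _)
  have hkf : Nf ≤ k := le_trans (le_trans (le_max_left _ _) (le_max_right _ _))
    (le_max_right _ _)
  have hkg : Ng ≤ k := le_trans (le_trans (le_max_right _ _) (le_max_right _ _))
    (le_max_right _ _)
  have hd : hn k - fn k * gn k ∈ (⊥ : Ideal R).jacobson ^ l :=
    sub_mem_pow_of_eval_eq _ l _ _ (by rw [hN1 k hk1, hN2 k hk2])
  have hdle : ν ((hn k - fn k * gn k : R) : K) ≤ c ^ l :=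
    val_le_pow_of_mem_pow R ν c hR1 hc2 l _ hd
  have hprodval : ν ((fn k * gn k : R) : K) = u * w := by
    have he : ((fn k * gn k : R) : K) = ((fn k : R) : K) * ((gn k : R) : K) := by
      push_cast; ring
    rw [he, map_mul, hfu k hkf, hgw k hkg]
  have he2 : ((hn k : R) : K) = ((fn k * gn k : R) : K) + ((hn k - fn k * gn k : R) : K) := by
    push_cast; ring
  have hhval : ν ((hn k : R) : K) = u * w := by
    rw [he2, Valuation.map_add_eq_of_lt_left, hprodval]
    rw [hprodval]
    exact lt_of_le_of_lt hdle hluw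
  have := hN3 k hk3
  rw [hhval] at this
  exact absurd (lt_of_le_of_lt this hluw) (lt_irrefl _)

theorem prime_ideal_of_infinite_value_isPrime
    (R : Subring K) (hloc : IsLocalRing R) (hnoeth : IsNoetherianRing R)
    (hfrac : R.IsFractionFieldOf)
    (ν : Valuation K Γ) (hdom : ν.valuationSubring.toSubring.Dominates R)
    (c : Γ) (hc : IsMaxIdealValue R ν c) :
    ∃ I : Ideal (AdicCompletion ((⊥ : Ideal R).jacobson) R),
      I.IsPrime ∧ ∀ F, F ∈ I ↔ SatisfiesStar R ν c F := by
  obtain ⟨hVloc, hRloc, hRV, hdomiff⟩ := hdom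
  -- ν is ≤ 1 on R since R ⊆ V
  have hR1 : ∀ r : R, ν (r : K) ≤ 1 := fun r => hRV r.2
  -- c < 1
  have hc1 : c < 1 := by
    obtain ⟨⟨a, hamem, haval⟩, -⟩ := hc
    haveI := hVloc
    have h1 : Subring.inclusion hRV a ∈ (⊥ : Ideal ν.valuationSubring.toSubring).jacobson :=
      (hdomiff a).mpr hamem
    rw [IsLocalRing.jacobson_eq_maximalIdeal ⊥ bot_ne_top] at h1
    have hnon := (IsLocalRing.mem_maximalIdeal _).mp h1
    rcases lt_or_eq_of_le (hR1 a) with h | h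
    · rw [← haval]; exact h
    · exfalso
      apply hnon
      have hane : (a : K) ≠ 0 := by
        intro h0; rw [h0, map_zero] at h; exact zero_ne_one h
      have hinv : (a : K)⁻¹ ∈ ν.valuationSubring.toSubring := by
        show ν _ ≤ 1
        rw [map_inv₀, h, inv_one]
      refine IsUnit.of_mul_eq_one ⟨(a : K)⁻¹, hinv⟩ ?_
      ext
      push_cast
      exact mul_inv_cancel₀ hane
  refine ⟨starIdeal R ν c hR1, ?_, fun F => Iff.rfl⟩
  rw [Ideal.isPrime_iff]
  constructor
  · intro htop
    apply not_star_one R ν c hR1 hc.2 hc1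
    rw [← mem_starIdeal R ν c hR1, htop]
    exact Submodule.mem_top
  · intro F G hFG
    exact star_mul R ν c hR1 hc.2 F G hFG

end
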